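/- Let n ≥ 1 be an integer, h ≠ 0 a real number, and P a real polynomial of degree at most 2n. Then P″(0) = (1/h²) ∑_{m=1}^{n} α_m^{(2)}(n) · (P(mh) − 2P(0) + P(−mh)). -/

import Mathlib

open Finset Polynomial

/-- `π_m(n) = ∏_{k=1, k ≠ m}^{n} (1 - m²/k²)`. -/
noncomputable def pim (n m : ℕ) : ℝ :=
  ∏ k ∈ (Finset.Icc 1 n).erase m, (1 - (m : ℝ) ^ 2 / (k : ℝ) ^ 2)

/-- `α_m^{(2)}(n) = 1 / (m² · π_m(n))`. -/
noncomputable def alpha2 (n m : ℕ) : ℝ := 1 / ((m : ℝ) ^ 2 * pim n m)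

lemma lagrange_key (n i : ℕ) (hn : 1 ≤ n) (hi1 : 1 ≤ i) (hin : i ≤ n) :
    ∑ m ∈ Finset.Icc 1 n, alpha2 n m * (m : ℝ) ^ (2 * i) =
      if i = 1 then 1 else 0 := by
  set v : ℕ → ℝ := fun m => (m : ℝ) ^ 2 with hv
  have hvs : Set.InjOn v (Finset.Icc 1 n) := by
    intro a ha b hb hab
    simp only [hv] at hab
    have ha' : (0:ℝ) ≤ (a:ℝ) := by positivity
    have hb' : (0:ℝ) ≤ (b:ℝ) := by positivity
    have : (a : ℝ) = b := by nlinarith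
    exact_mod_cast this
  have hcard : ((Finset.Icc 1 n).card : ℕ) = n := by
    rw [Nat.card_Icc]; omega
  have hdeg : (X ^ (i-1) : ℝ[X]).degree < (Finset.Icc 1 n).card := by
    rw [hcard, Polynomial.degree_X_pow]
    exact_mod_cast Nat.lt_of_lt_of_le (Nat.sub_lt hi1 one_pos) hin
  have hinterp := Lagrange.eq_interpolate (v := v) (s := Finset.Icc 1 n) hvs hdeg
  have heval := congrArg (Polynomial.eval (0:ℝ)) hinterp
  rw [Lagrange.interpolate_apply, Polynomial.eval_finset_sum] at heval
  have hL : Polynomial.eval (0:ℝ) (X ^ (i-1) : ℝ[X]) = if i = 1 then 1 else 0 := by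
    rcases eq_or_ne i 1 with rfl | hi
    · simp
    · simp [hi, zero_pow (by omega : i - 1 ≠ 0)]
  rw [hL] at heval
  rw [heval]
  apply Finset.sum_congr rfl
  intro m hm
  have hm1 : 1 ≤ m := (Finset.mem_Icc.mp hm).1
  have hm0 : ((m:ℝ)) ≠ 0 := by positivity
  rw [Polynomial.eval_mul, Polynomial.eval_C, Lagrange.basis, Polynomial.eval_prod]
  have hprod : ∏ k ∈ (Finset.Icc 1 n).erase m,
      Polynomial.eval 0 (Lagrange.basisDivisor (v m) (v k)) = (pim n m)⁻¹ := by
    rw [pim, ← Finset.prod_inv_distrib]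
    apply Finset.prod_congr rfl
    intro k hk
    have hk' := Finset.mem_erase.mp hk
    have hk1 : 1 ≤ k := (Finset.mem_Icc.mp hk'.2).1
    have hk0 : ((k:ℝ)) ≠ 0 := by positivity
    have hmk : (m:ℝ)^2 ≠ (k:ℝ)^2 := by
      intro hc
      exact hk'.1 (hvs hk'.2 hm hc.symm)
    have hne : (k:ℝ)^2 - (m:ℝ)^2 ≠ 0 := sub_ne_zero.mpr (Ne.symm hmk)
    have hne' : (m:ℝ)^2 - (k:ℝ)^2 ≠ 0 := sub_ne_zero.mpr hmk
    simp only [Lagrange.basisDivisor, Polynomial.eval_mul, Polynomial.eval_C,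
      Polynomial.eval_sub, Polynomial.eval_X, hv]
    field_simp
    ring
  rw [hprod, Polynomial.eval_pow, Polynomial.eval_X]
  have hpowm : (m:ℝ)^(2*i) = (m:ℝ)^2 * ((m:ℝ)^2)^(i-1) := by
    rw [pow_mul, ← pow_succ']
    congr 1
    omega
  rw [alpha2, hpowm, one_div, mul_inv]
  have hm2 : (((m:ℝ)^2)⁻¹) * ((m:ℝ)^2) = 1 := inv_mul_cancel₀ (by positivity)
  simp only [hv]
  linear_combination ((m:ℝ)^2)^(i-1) * (pim n m)⁻¹ * hm2

lemma centralInnerSum (n : ℕ) (hn : 1 ≤ n) (h : ℝ) (hh : h ≠ 0) (j : ℕ) (hj : j ≤ 2*n) :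
    (1/h^2) * ∑ m ∈ Finset.Icc 1 n,
        alpha2 n m * (((m:ℝ)*h)^j - 2*(0:ℝ)^j + (-((m:ℝ)*h))^j)
      = if j = 2 then 2 else 0 := by
  rcases Nat.even_or_odd j with ⟨i, hij⟩ | ⟨i, hij⟩
  · subst hij
    rcases Nat.eq_zero_or_pos i with rfl | hi
    · have h0 : ∑ m ∈ Finset.Icc 1 n,
          alpha2 n m * (((m:ℝ)*h)^(0+0) - 2*(0:ℝ)^(0+0) + (-((m:ℝ)*h))^(0+0)) = 0 :=
        Finset.sum_eq_zero (fun m _ => by norm_num)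
      rw [h0, mul_zero, if_neg (by omega)]
    · have hstep : ∑ m ∈ Finset.Icc 1 n,
          alpha2 n m * (((m:ℝ)*h)^(i+i) - 2*(0:ℝ)^(i+i) + (-((m:ℝ)*h))^(i+i))
          = (2*h^(i+i)) * ∑ m ∈ Finset.Icc 1 n, alpha2 n m * (m:ℝ)^(2*i) := by
        rw [Finset.mul_sum]
        apply Finset.sum_congr rfl
        intro m _
        have hev : Even (i+i) := ⟨i, rfl⟩
        rw [hev.neg_pow, zero_pow (by omega : i + i ≠ 0), mul_pow, two_mul]
        ring
      rw [hstep, lagrange_key n i hn hi (by omega)]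
      rcases eq_or_ne i 1 with rfl | hi1
      · simp only [if_pos rfl, mul_one, show (1:ℕ)+1 = 2 from rfl]
        field_simp
        simp
      · simp [hi1, show i + i ≠ 2 by omega]
  · have hzero : ∑ m ∈ Finset.Icc 1 n,
        alpha2 n m * (((m:ℝ)*h)^j - 2*(0:ℝ)^j + (-((m:ℝ)*h))^j) = 0 := by
      apply Finset.sum_eq_zero
      intro m _
      have hodd : Odd j := ⟨i, hij⟩
      rw [hodd.neg_pow, zero_pow (by omega : j ≠ 0)]
      ring
    rw [hzero, mul_zero, if_neg (by omega)]

/-- for every `n ≥ 1`, `h ≠ 0` and real polynomial `P` of degree at most `2n`,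
`P″(0) = (1/h²) ∑_{m=1}^{n} α_m^{(2)}(n) (P(mh) - 2P(0) + P(-mh))`. -/
theorem central_diff_second_deriv_exact (n : ℕ) (hn : 1 ≤ n) (h : ℝ) (hh : h ≠ 0)
    (P : Polynomial ℝ) (hP : P.degree ≤ 2 * n) :
    (Polynomial.derivative (Polynomial.derivative P)).eval 0 =
      (1 / h ^ 2) *
        ∑ m ∈ Finset.Icc 1 n,
          alpha2 n m * (P.eval ((m : ℝ) * h) - 2 * P.eval 0 + P.eval (-((m : ℝ) * h))) := by
  have hnat : P.natDegree ≤ 2*n := Polynomial.natDegree_le_iff_degree_le.mpr hP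
  have hlt : P.natDegree < 2*n+1 := by omega
  have hexp : ∀ x : ℝ, P.eval x = ∑ j ∈ Finset.range (2*n+1), P.coeff j * x^j :=
    fun x => Polynomial.eval_eq_sum_range' hlt x
  have hL : (Polynomial.derivative (Polynomial.derivative P)).eval 0 = 2 * P.coeff 2 := by
    rw [← Polynomial.coeff_zero_eq_eval_zero, Polynomial.coeff_derivative,
      Polynomial.coeff_derivative]
    push_cast
    ring
  rw [hL]
  have hstep : ∑ m ∈ Finset.Icc 1 n,
      alpha2 n m * (P.eval ((m : ℝ) * h) - 2 * P.eval 0 + P.eval (-((m : ℝ) * h)))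
      = ∑ j ∈ Finset.range (2*n+1), ∑ m ∈ Finset.Icc 1 n,
          P.coeff j * (alpha2 n m * (((m:ℝ)*h)^j - 2*(0:ℝ)^j + (-((m:ℝ)*h))^j)) := by
    rw [Finset.sum_comm]
    apply Finset.sum_congr rfl
    intro m _
    rw [hexp ((m:ℝ)*h), hexp 0, hexp (-((m:ℝ)*h))]
    simp only [Finset.mul_sum]
    rw [← Finset.sum_sub_distrib, ← Finset.sum_add_distrib, Finset.mul_sum]
    apply Finset.sum_congr rfl
    intro j _
    ring
  rw [hstep, Finset.mul_sum]
  have hinner : ∀ j ∈ Finset.range (2*n+1),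
      (1/h^2) * ∑ m ∈ Finset.Icc 1 n,
        P.coeff j * (alpha2 n m * (((m:ℝ)*h)^j - 2*(0:ℝ)^j + (-((m:ℝ)*h))^j))
      = P.coeff j * (if j = 2 then 2 else 0) := by
    intro j hj
    rw [← centralInnerSum n hn h hh j (by simpa using Nat.lt_succ_iff.mp (Finset.mem_range.mp hj)),
      ← Finset.mul_sum]
    ring
  rw [Finset.sum_congr rfl hinner]
  simp only [mul_ite, mul_zero]
  rw [Finset.sum_ite_eq' (Finset.range (2*n+1)) 2]
  rw [if_pos (Finset.mem_range.mpr (by omega))]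
  ring
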